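/- In the wait-free writable big atomic, the mark bits on W and Z are mismatched if and only if there is a pending write; consequently, the value of the write buffer W cannot change while a write is pending. -/
import Mathlib


/-- State of the writable big atomic: mark bit of `Z`, mark bit of `W`, and the
write-buffer pointer `W`. -/
structure WBState (α : Type*) where
  mZ : Bool
  mW : Bool
  W : α

/-- Events of the writable big atomic protocol. -/
inductive WBEvent
  | install
  | transfer
  | other

/-- The marks on `W` and `Z` are mismatched exactly while a write is
pending: installing a new value in `W` (the only event that changes `W`) requires
matched marks and flips `mW`; a transfer (the only event that changes `mZ`) requires
mismatched marks, flips `mZ` and leaves `W` unchanged; other events change nothing.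
Consequently, if the marks are mismatched at time `i` and `W` has changed by time `j`,
some transfer event occurred in between. -/
theorem pending_write_freezes_W {α : Type*}
    (s : ℕ → WBState α) (e : ℕ → WBEvent)
    (hinstall : ∀ i, e i = WBEvent.install →
      (s i).mZ = (s i).mW ∧ (s (i + 1)).mW = !(s i).mW ∧ (s (i + 1)).mZ = (s i).mZ)
    (htransfer : ∀ i, e i = WBEvent.transfer →
      (s i).mZ ≠ (s i).mW ∧ (s (i + 1)).mZ = !(s i).mZ ∧
        (s (i + 1)).mW = (s i).mW ∧ (s (i + 1)).W = (s i).W)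
    (hWonly : ∀ i, e i ≠ WBEvent.install → (s (i + 1)).W = (s i).W)
    (hother : ∀ i, e i = WBEvent.other → s (i + 1) = s i) :
    ∀ i j, i ≤ j → (s i).mZ ≠ (s i).mW → (s j).W ≠ (s i).W →
      ∃ k, i ≤ k ∧ k < j ∧ e k = WBEvent.transfer := by
  intro i j hij hmis hW
  by_contra hno
  push_neg at hno
  have main : ∀ k, i ≤ k → k ≤ j → (s k).W = (s i).W ∧ (s k).mZ ≠ (s k).mW := by
    intro k hik hkj
    induction k with
    | zero =>
      have : i = 0 := Nat.le_zero.mp hik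
      simp [this] at *; exact hmis
    | succ n ih =>
      rcases Nat.lt_or_ge i (n+1) with hlt | hge
      · have hin : i ≤ n := Nat.lt_succ_iff.mp hlt
        have hnj : n ≤ j := le_trans (Nat.le_succ n) hkj
        obtain ⟨hWn, hmn⟩ := ih hin hnj
        have hnt : e n ≠ WBEvent.transfer := hno n hin (Nat.lt_of_succ_le hkj)
        have hni : e n ≠ WBEvent.install := by
          intro h
          exact hmn ((hinstall n h).1)
        have ho : e n = WBEvent.other := by
          cases h : e n <;> simp_all
        rw [hother n ho]
        exact ⟨hWn, hmn⟩
      · have : i = n + 1 := le_antisymm hik hge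
        rw [this] at hmis ⊢
        exact ⟨rfl, hmis⟩
  exact hW (main j hij le_rfl).1
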